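/- For all n ≥ 1, the length of the T-module I_{n-1}/(Iₙ : x₃^{q+m}) equals n. -/

import Mathlib

open MvPolynomial

/-- The monomial ideal `J = (x₂², x₂x₃^{q+m}, x₃^{q+m+1})` of `T = k[x₂,x₃]`
(here `X 0 = x₂`, `X 1 = x₃`). -/
noncomputable def Jideal (k : Type*) [Field k] (q m : ℕ) : Ideal (MvPolynomial (Fin 2) k) :=
  Ideal.span {X 0 ^ 2, X 0 * X 1 ^ (q+m), X 1 ^ (q+m+1)}

/-- The monomial ideal `F = (x₃^{2(q+m)+1})` of `T`. -/
noncomputable def Fideal (k : Type*) [Field k] (q m : ℕ) : Ideal (MvPolynomial (Fin 2) k) :=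
  Ideal.span {X 1 ^ (2*(q+m)+1)}

/-- `Iₙ = Σ_{n₁+2n₂=n} F^{n₂} J^{n₁}`. -/
noncomputable def Iideal (k : Type*) [Field k] (q m n : ℕ) : Ideal (MvPolynomial (Fin 2) k) :=
  ⨆ (c : ℕ × ℕ) (_ : c.1 + 2 * c.2 = n), (Fideal k q m) ^ c.2 * (Jideal k q m) ^ c.1

/-- The length of a module, as the Krull dimension of its lattice of submodules. -/
noncomputable def moduleLength (R M : Type*) [Ring R] [AddCommGroup M] [Module R M] :
    WithBot ℕ∞ :=
  Order.krullDim (Submodule R M)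

section Arith

lemma arith_core (s N a b c j i ρ : ℤ) (hs : 2 ≤ s) (ha : 0 ≤ a) (hb : 0 ≤ b)
    (hc : 0 ≤ c) (hj : 0 ≤ j) (hi : 0 ≤ i) (hρ : ρ = 0 ∨ ρ = 1)
    (hsum : a + b + c + 2*j = N + 1)
    (hx : 2*a + b ≤ 2*N - 4*i - ρ)
    (hy : s*b + (s+1)*c + (2*s+1)*j ≤ (2*s+1)*i + s*ρ + s) : False := by
  have hρ' : 0 ≤ ρ ∧ ρ ≤ 1 := by rcases hρ with rfl | rfl <;> omega
  have hji : j ≤ i := by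
    by_contra h
    push_neg at h
    nlinarith [mul_nonneg (by linarith : (0:ℤ) ≤ s) hb,
      mul_nonneg (by linarith : (0:ℤ) ≤ s+1) hc,
      mul_nonneg (by linarith : (0:ℤ) ≤ 2*s+1) (by linarith : (0:ℤ) ≤ j - i - 1),
      mul_nonneg (by linarith : (0:ℤ) ≤ s) (by linarith : (0:ℤ) ≤ 1 - ρ)]
  set w := i - j with hw
  have hw0 : 0 ≤ w := by omega
  have h2 : b + 2*c ≥ 4*w + ρ + 2 := by omega
  have hE2 : (s+1)*c ≤ (2*s+1)*w + s*ρ + s := by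
    nlinarith [mul_nonneg (by linarith : (0:ℤ) ≤ s) hb]
  have hE1 : (s-1)*c ≥ (2*s-1)*w + s := by
    nlinarith [mul_le_mul_of_nonneg_left h2 (by linarith : (0:ℤ) ≤ s),
      mul_nonneg (by linarith : (0:ℤ) ≤ s) (by linarith : (0:ℤ) ≤ ρ)]
  have hcw : c ≥ 2*w + 1 := by
    by_contra h
    push_neg at h
    nlinarith [mul_nonneg (by linarith : (0:ℤ) ≤ s - 1) (by linarith : (0:ℤ) ≤ 2*w - c)]
  rcases hρ with rfl | rfl
  · nlinarith [mul_le_mul_of_nonneg_left hcw (by linarith : (0:ℤ) ≤ s+1)]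
  · have hcw2 : c ≥ 2*w + 2 := by
      rcases lt_or_ge c (2*w + 2) with h | h
      · exfalso
        have hceq : c = 2*w + 1 := by omega
        rw [hceq] at hE1
        nlinarith
      · exact h
    nlinarith [mul_le_mul_of_nonneg_left hcw2 (by linarith : (0:ℤ) ≤ s+1)]

end Arith


namespace St6

noncomputable def E (u v : ℕ) : Fin 2 →₀ ℕ := Finsupp.single 0 u + Finsupp.single 1 v

lemma E_apply0 (u v : ℕ) : E u v 0 = u := by simp [E, Finsupp.single_apply]
lemma E_apply1 (u v : ℕ) : E u v 1 = v := by simp [E, Finsupp.single_apply]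

lemma E_add (u v u' v' : ℕ) : E u v + E u' v' = E (u + u') (v + v') := by
  simp only [E, Finsupp.single_add]
  abel

lemma E_le_E {u v u' v' : ℕ} : E u v ≤ E u' v' ↔ u ≤ u' ∧ v ≤ v' := by
  constructor
  · intro h
    exact ⟨by simpa [E_apply0] using h 0, by simpa [E_apply1] using h 1⟩
  · rintro ⟨h1, h2⟩ i
    fin_cases i
    · simpa [E_apply0] using h1
    · simpa [E_apply1] using h2

lemma E_inj {u v u' v' : ℕ} (h : E u v = E u' v') : u = u' ∧ v = v' := by
  constructor
  · have h0 := DFunLike.congr_fun h 0; simpa [E_apply0, E_apply1] using h0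
  · have h1 := DFunLike.congr_fun h 1; simpa [E_apply0, E_apply1] using h1

lemma E_congr {u v u' v' : ℕ} (h1 : u = u') (h2 : v = v') : E u v = E u' v' := by
  rw [h1, h2]

variable {k : Type*} [Field k]

lemma monomial_E (u v : ℕ) :
    (monomial (E u v) (1 : k)) = X 0 ^ u * X 1 ^ v := by
  rw [X_pow_eq_monomial, X_pow_eq_monomial, monomial_mul, one_mul]; rfl

/-- exponent set of `J^t`, with `s = q + m` -/
def JS (s t : ℕ) : Set (Fin 2 →₀ ℕ) :=
  {d | ∃ a b c : ℕ, a + b + c = t ∧ d = E (2*a+b) (s*b + (s+1)*c)}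

/-- exponent set of `Iₙ`, with `s = q + m` -/
def IS (s n : ℕ) : Set (Fin 2 →₀ ℕ) :=
  {d | ∃ a b c j : ℕ, a + b + c + 2*j = n ∧ d = E (2*a+b) (s*b + (s+1)*c + (2*s+1)*j)}

variable (q m : ℕ)

lemma J_eq : Jideal k q m =
    Ideal.span ((fun d => monomial d (1:k)) '' {E 2 0, E 1 (q+m), E 0 (q+m+1)}) := by
  rw [Jideal]
  congr 1
  rw [Set.image_insert_eq, Set.image_insert_eq, Set.image_singleton]
  simp [monomial_E]

lemma Jpow_eq (t : ℕ) : (Jideal k q m) ^ t =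
    Ideal.span ((fun d => monomial d (1:k)) '' JS (q+m) t) := by
  induction t with
  | zero =>
    rw [pow_zero, Ideal.one_eq_top, eq_comm, Ideal.eq_top_iff_one]
    apply Ideal.subset_span
    exact ⟨E 0 0, ⟨0, 0, 0, by norm_num, by norm_num⟩, by simp [monomial_E]⟩
  | succ t ih =>
    rw [pow_succ, ih, J_eq, Ideal.span_mul_span']
    apply le_antisymm
    · rw [Ideal.span_le]
      rintro x ⟨p, ⟨d, ⟨a, b, c, habc, rfl⟩, rfl⟩, r, ⟨e, he, rfl⟩, rfl⟩
      dsimp only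
      rw [monomial_mul, one_mul]
      apply Ideal.subset_span
      simp only [Set.mem_insert_iff, Set.mem_singleton_iff] at he
      rcases he with rfl | rfl | rfl
      · exact ⟨_, ⟨a+1, b, c, by omega, by rw [E_add]; exact E_congr (by ring) (by ring)⟩, rfl⟩
      · exact ⟨_, ⟨a, b+1, c, by omega, by rw [E_add]; exact E_congr (by ring) (by ring)⟩, rfl⟩
      · exact ⟨_, ⟨a, b, c+1, by omega, by rw [E_add]; exact E_congr (by ring) (by ring)⟩, rfl⟩
    · rw [Ideal.span_le]
      rintro x ⟨d, ⟨a, b, c, habc, rfl⟩, rfl⟩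
      dsimp only
      rw [SetLike.mem_coe, ← Ideal.span_mul_span']
      have key : ∀ (a' b' c' : ℕ) (e : Fin 2 →₀ ℕ),
          a' + b' + c' = t → e ∈ ({E 2 0, E 1 (q+m), E 0 (q+m+1)} : Set (Fin 2 →₀ ℕ)) →
          E (2*a'+b') ((q+m)*b' + (q+m+1)*c') + e = E (2*a+b) ((q+m)*b + (q+m+1)*c) →
          (monomial (E (2*a+b) ((q+m)*b + (q+m+1)*c)) (1:k)) ∈
            Ideal.span ((fun d => monomial d (1:k)) '' JS (q+m) t) *
              Ideal.span ((fun d => monomial d (1:k)) '' {E 2 0, E 1 (q+m), E 0 (q+m+1)}) := by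
        intro a' b' c' e hsum he heq
        have := Ideal.mul_mem_mul
          (Ideal.subset_span (Set.mem_image_of_mem (fun d => monomial d (1:k)) (show E (2*a'+b') ((q+m)*b' + (q+m+1)*c') ∈ JS (q+m) t from ⟨a', b', c', hsum, rfl⟩)))
          (Ideal.subset_span (Set.mem_image_of_mem (fun d => monomial d (1:k)) he))
        rwa [monomial_mul, one_mul, heq] at this
      rcases Nat.eq_zero_or_pos a with rfl | ha
      · rcases Nat.eq_zero_or_pos b with rfl | hb
        · obtain ⟨c', rfl⟩ : ∃ c', c = c' + 1 := ⟨c - 1, by omega⟩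
          exact key 0 0 c' (E 0 (q+m+1)) (by omega) (by simp)
            (by rw [E_add]; exact E_congr (by ring) (by ring))
        · obtain ⟨b', rfl⟩ : ∃ b', b = b' + 1 := ⟨b - 1, by omega⟩
          exact key 0 b' c (E 1 (q+m)) (by omega) (by simp)
            (by rw [E_add]; exact E_congr (by ring) (by ring))
      · obtain ⟨a', rfl⟩ : ∃ a', a = a' + 1 := ⟨a - 1, by omega⟩
        exact key a' b c (E 2 0) (by omega) (by simp)
          (by rw [E_add]; exact E_congr (by ring) (by ring))

lemma Fpow_eq (j : ℕ) : (Fideal k q m) ^ j =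
    Ideal.span {(monomial (E 0 ((2*(q+m)+1)*j)) (1:k))} := by
  rw [Fideal, Ideal.span_singleton_pow, ← pow_mul, monomial_E, pow_zero, one_mul]

lemma I_eq (n : ℕ) : Iideal k q m n =
    Ideal.span ((fun d => monomial d (1:k)) '' IS (q+m) n) := by
  rw [Iideal]
  apply le_antisymm
  · apply iSup_le
    rintro ⟨t, j⟩
    apply iSup_le
    intro hc
    simp only at hc
    rw [Fpow_eq, Jpow_eq, Ideal.span_mul_span']
    rw [Ideal.span_le]
    rintro x ⟨p, hp, r, ⟨d, ⟨a, b, c, habc, rfl⟩, rfl⟩, rfl⟩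
    simp only [Set.mem_singleton_iff] at hp
    subst hp
    dsimp only
    rw [monomial_mul, one_mul, E_add]
    apply Ideal.subset_span
    refine ⟨_, ⟨a, b, c, j, by omega, E_congr (by ring) (by ring)⟩, rfl⟩
  · rw [Ideal.span_le]
    rintro x ⟨d, ⟨a, b, c, j, hsum, rfl⟩, rfl⟩
    have h1 : (monomial (E 0 ((2*(q+m)+1)*j)) (1:k)) ∈ (Fideal k q m) ^ j := by
      rw [Fpow_eq]; exact Ideal.subset_span rfl
    have h2 : (monomial (E (2*a+b) ((q+m)*b + (q+m+1)*c)) (1:k)) ∈ (Jideal k q m) ^ (a+b+c) := by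
      rw [Jpow_eq]; exact Ideal.subset_span ⟨_, ⟨a, b, c, rfl, rfl⟩, rfl⟩
    have h3 := Ideal.mul_mem_mul h1 h2
    rw [monomial_mul, one_mul, E_add] at h3
    have h4 : (Fideal k q m) ^ j * (Jideal k q m) ^ (a+b+c) ≤
        ⨆ (c : ℕ × ℕ) (_ : c.1 + 2 * c.2 = n), (Fideal k q m) ^ c.2 * (Jideal k q m) ^ c.1 := by
      apply le_iSup_of_le (a + b + c, j)
      exact le_iSup_of_le (by simpa using hsum) le_rfl
    have h5 := h4 h3
    have he : E (0 + (2*a+b)) ((2*(q+m)+1)*j + ((q+m)*b + (q+m+1)*c))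
        = E (2*a+b) ((q+m)*b + (q+m+1)*c + (2*(q+m)+1)*j) := E_congr (by ring) (by ring)
    rwa [he] at h5
-- CHUNK3 (to be appended inside namespace St6, after I_eq)

noncomputable def KK (n : ℕ) : Ideal (MvPolynomial (Fin 2) k) :=
  Submodule.colon (Iideal k q m n) (Ideal.span {(X 1 : MvPolynomial (Fin 2) k) ^ (q+m)})

lemma mem_KK_iff {n : ℕ} {f : MvPolynomial (Fin 2) k} :
    f ∈ KK q m n ↔ X 1 ^ (q+m) * f ∈ Iideal k q m n := by
  rw [KK, Ideal.mem_colon_span_singleton, mul_comm]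

lemma mono_mem_span_iff {S : Set (Fin 2 →₀ ℕ)} {dd : Fin 2 →₀ ℕ} :
    (monomial dd (1:k)) ∈ Ideal.span ((fun d => monomial d (1:k)) '' S) ↔ ∃ e ∈ S, e ≤ dd := by
  rw [mem_ideal_span_monomial_image]
  simp [support_monomial]

lemma mono_mem_I_iff {n : ℕ} {dd : Fin 2 →₀ ℕ} :
    (monomial dd (1:k)) ∈ Iideal k q m n ↔ ∃ e ∈ IS (q+m) n, e ≤ dd := by
  rw [I_eq, mono_mem_span_iff]

lemma monomial_mul_I_mem {n : ℕ} {e : Fin 2 →₀ ℕ}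
    (h : ∀ d ∈ IS (q+m) n, ∃ d' ∈ IS (q+m) (n+1), d' ≤ e + d) :
    ∀ f ∈ Iideal k q m n, (monomial e (1:k)) * f ∈ Iideal k q m (n+1) := by
  intro f hf
  rw [I_eq] at hf ⊢
  have hle : Ideal.span {monomial e (1:k)} *
      Ideal.span ((fun d => monomial d (1:k)) '' IS (q+m) n) ≤
      Ideal.span ((fun d => monomial d (1:k)) '' IS (q+m) (n+1)) := by
    rw [Ideal.span_mul_span', Ideal.span_le]
    rintro x ⟨p, hp, r, ⟨d, hd, rfl⟩, rfl⟩
    simp only [Set.mem_singleton_iff] at hp; subst hp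
    dsimp only
    rw [SetLike.mem_coe, monomial_mul, one_mul, mono_mem_span_iff]
    exact h d hd
  exact hle (Ideal.mul_mem_mul (Ideal.subset_span rfl) hf)

lemma X0_mul_mem {n : ℕ} {f : MvPolynomial (Fin 2) k} (hf : f ∈ Iideal k q m n) :
    X 0 * f ∈ KK q m (n+1) := by
  rw [mem_KK_iff]
  have heq : X 1 ^ (q+m) * (X 0 * f) = (monomial (E 1 (q+m)) (1:k)) * f := by
    rw [monomial_E, pow_one]; ring
  rw [heq]
  refine monomial_mul_I_mem q m ?_ f hf
  rintro d ⟨a, b, c, j, hsum, rfl⟩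
  exact ⟨_, ⟨a, b+1, c, j, by omega, rfl⟩,
    le_of_eq (by rw [E_add]; exact E_congr (by ring) (by ring))⟩

lemma X1_mul_mem {n : ℕ} {f : MvPolynomial (Fin 2) k} (hf : f ∈ Iideal k q m n) :
    X 1 * f ∈ KK q m (n+1) := by
  rw [mem_KK_iff]
  have heq : X 1 ^ (q+m) * (X 1 * f) = (monomial (E 0 (q+m+1)) (1:k)) * f := by
    rw [monomial_E, pow_zero, one_mul, pow_succ]; ring
  rw [heq]
  refine monomial_mul_I_mem q m ?_ f hf
  rintro d ⟨a, b, c, j, hsum, rfl⟩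
  exact ⟨_, ⟨a, b, c+1, j, by omega, rfl⟩,
    le_of_eq (by rw [E_add]; exact E_congr (by ring) (by ring))⟩

lemma XY_mul_mem {n : ℕ} {g f : MvPolynomial (Fin 2) k}
    (hg : g ∈ Ideal.span {X 0, X 1}) (hf : f ∈ Iideal k q m n) :
    g * f ∈ KK q m (n+1) := by
  rw [Ideal.mem_span_pair] at hg
  obtain ⟨u, v, rfl⟩ := hg
  have heq : (u * X 0 + v * X 1) * f = u * (X 0 * f) + v * (X 1 * f) := by ring
  rw [heq]
  exact add_mem (Ideal.mul_mem_left _ _ (X0_mul_mem q m hf))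
    (Ideal.mul_mem_left _ _ (X1_mul_mem q m hf))

lemma sub_C_mem_span_X (p : MvPolynomial (Fin 2) k) :
    p - C (constantCoeff p) ∈ Ideal.span {X 0, X 1} := by
  have hset : ({X 0, X 1} : Set (MvPolynomial (Fin 2) k)) =
      (fun d => monomial d (1:k)) '' {Finsupp.single 0 1, Finsupp.single 1 1} := by
    rw [Set.image_insert_eq, Set.image_singleton]
    simp [← X_pow_eq_monomial]
  rw [hset, mem_ideal_span_monomial_image]
  intro d hd
  have hd0 : d ≠ 0 := by
    rintro rfl
    rw [mem_support_iff] at hd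
    apply hd
    simp [coeff_sub, constantCoeff_eq]
  obtain ⟨idx, hidx⟩ : ∃ i, d i ≠ 0 := by
    by_contra h
    push_neg at h
    exact hd0 (Finsupp.ext h)
  refine ⟨Finsupp.single idx 1, by fin_cases idx <;> simp,
    Finsupp.single_le_iff.mpr (Nat.one_le_iff_ne_zero.mpr hidx)⟩

/-- the basis-monomial exponents -/
noncomputable def bex (s N r : ℕ) : Fin 2 →₀ ℕ :=
  E (2*N - 2*r + r % 2) ((2*s+1)*(r/2) + s*(r%2))

lemma bex_mem_IS {N r : ℕ} (hr : r ≤ N) : bex (q+m) N r ∈ IS (q+m) N :=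
  ⟨N - r, r % 2, 0, r / 2, by omega, E_congr (by omega) (by ring)⟩

lemma bex_mem_I {N r : ℕ} (hr : r ≤ N) :
    (monomial (bex (q+m) N r) (1:k)) ∈ Iideal k q m N :=
  (mono_mem_I_iff q m).mpr ⟨_, bex_mem_IS q m hr, le_rfl⟩

lemma gen_classify {N : ℕ} (hs1 : 1 ≤ q + m) :
    ∀ d ∈ IS (q+m) N, (monomial d (1:k)) ∈ KK q m (N+1) ∨ ∃ r ≤ N, d = bex (q+m) N r := by
  rintro d ⟨a, b, c, j, hsum, rfl⟩
  have hX1s : (X 1 : MvPolynomial (Fin 2) k) ^ (q+m) = monomial (E 0 (q+m)) 1 := by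
    rw [monomial_E, pow_zero, one_mul]
  by_cases hc1 : 1 ≤ c
  · left
    obtain ⟨c', rfl⟩ : ∃ c', c = c' + 1 := ⟨c - 1, by omega⟩
    rw [mem_KK_iff, hX1s, monomial_mul, one_mul, mono_mem_I_iff]
    exact ⟨_, ⟨a, b, c', j+1, by omega, rfl⟩,
      le_of_eq (by rw [E_add]; exact E_congr (by ring) (by ring))⟩
  · by_cases hb2 : 2 ≤ b
    · left
      obtain ⟨b', rfl⟩ : ∃ b', b = b' + 2 := ⟨b - 2, by omega⟩
      rw [mem_KK_iff, hX1s, monomial_mul, one_mul, mono_mem_I_iff]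
      refine ⟨_, ⟨a+1, b', c, j+1, by omega, rfl⟩, ?_⟩
      rw [E_add, E_le_E]
      constructor
      · omega
      · nlinarith
    · right
      obtain rfl : c = 0 := by omega
      refine ⟨2*j + b, by omega, ?_⟩
      have h1 : (2*j+b) % 2 = b := by omega
      have h2 : (2*j+b) / 2 = j := by omega
      rw [bex, h1, h2]
      exact E_congr (by omega) (by ring)

lemma no_dvd_bex {N r : ℕ} (hs2 : 2 ≤ q + m) (hr : r ≤ N) :
    ¬ ∃ e ∈ IS (q+m) (N+1), e ≤ E 0 (q+m) + bex (q+m) N r := by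
  rintro ⟨e, ⟨a, b, c, j, hsum, rfl⟩, hle⟩
  rw [bex, E_add, E_le_E] at hle
  obtain ⟨hx, hy⟩ := hle
  obtain ⟨i, ρ, hrd, hρ⟩ : ∃ i ρ, r = 2*i + ρ ∧ (ρ = 0 ∨ ρ = 1) :=
    ⟨r/2, r%2, by omega, by omega⟩
  have hq2 : r / 2 = i := by omega
  have hm2 : r % 2 = ρ := by omega
  rw [hm2] at hx
  rw [hq2, hm2] at hy
  refine arith_core ((q:ℤ)+m) N a b c j i ρ (by exact_mod_cast hs2)
    (by positivity) (by positivity) (by positivity) (by positivity) (by positivity)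
    (by rcases hρ with h | h <;> [left; right] <;> exact_mod_cast h)
    (by exact_mod_cast hsum) ?_ ?_
  · -- x inequality
    have : 2*a + b ≤ 2*N - 2*r + ρ := by omega
    omega
  · -- y inequality
    push_cast
    push_cast at hy
    linarith

-- CHUNK 4 (inside namespace St6)

lemma mem_I_iff {n : ℕ} {f : MvPolynomial (Fin 2) k} :
    f ∈ Iideal k q m n ↔ ∀ d ∈ f.support, ∃ e ∈ IS (q+m) n, e ≤ d := by
  rw [I_eq, mem_ideal_span_monomial_image]

lemma bex_inj {N r r' : ℕ} (hr : r ≤ N) (hr' : r' ≤ N) (s : ℕ)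
    (h : bex s N r = bex s N r') : r = r' := by
  rw [bex, bex] at h
  have := (E_inj h).1
  omega

lemma X1s_eq : (X 1 : MvPolynomial (Fin 2) k) ^ (q+m) = monomial (E 0 (q+m)) 1 := by
  rw [monomial_E, pow_zero, one_mul]

lemma coeff_shift_sum {N : ℕ} (c : Fin (N+1) → k) (r₀ : Fin (N+1)) :
    coeff (E 0 (q+m) + bex (q+m) N r₀)
      (X 1 ^ (q+m) * ∑ r, c r • monomial (bex (q+m) N r) (1:k)) = c r₀ := by
  rw [Finset.mul_sum]
  have hterm : ∀ r : Fin (N+1), X 1 ^ (q+m) * (c r • monomial (bex (q+m) N r) (1:k))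
      = monomial (E 0 (q+m) + bex (q+m) N r) (c r) := by
    intro r
    rw [X1s_eq, smul_monomial, monomial_mul, smul_eq_mul, mul_one, one_mul]
  simp only [hterm]
  rw [coeff_sum]
  rw [Finset.sum_eq_single r₀]
  · rw [coeff_monomial, if_pos rfl]
  · intro r _ hne
    rw [coeff_monomial, if_neg]
    intro heq
    apply hne
    have := add_left_cancel heq
    exact Fin.ext (bex_inj (by omega) (by omega) (q+m) this)
  · intro h
    exact absurd (Finset.mem_univ r₀) h

/-- If a `k`-combination of the basis monomials lies in the colon ideal, all coefficients
vanish. -/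
lemma indep_core {N : ℕ} (hs2 : 2 ≤ q + m) (c : Fin (N+1) → k)
    (h : (∑ r, c r • monomial (bex (q+m) N r) (1:k)) ∈ KK q m (N+1)) :
    ∀ r, c r = 0 := by
  intro r₀
  by_contra hne
  rw [mem_KK_iff] at h
  rw [mem_I_iff] at h
  have hsupp : (E 0 (q+m) + bex (q+m) N r₀) ∈
      (X 1 ^ (q+m) * ∑ r, c r • monomial (bex (q+m) N r) (1:k)).support := by
    rw [mem_support_iff, coeff_shift_sum]
    exact hne
  obtain ⟨e, he, hle⟩ := h _ hsupp
  exact no_dvd_bex q m hs2 (by omega : (r₀ : ℕ) ≤ N) ⟨e, he, hle⟩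

/-- Every element of `I_N` is a `k`-combination of basis monomials modulo the colon ideal. -/
lemma span_core {N : ℕ} (hs1 : 1 ≤ q + m) :
    ∀ f ∈ Iideal k q m N,
      f ∈ (Submodule.span k (Set.range (fun r : Fin (N+1) =>
            monomial (bex (q+m) N r) (1:k))) ⊔
          Submodule.restrictScalars k (KK (k := k) q m (N+1)) :
          Submodule k (MvPolynomial (Fin 2) k)) := by
  intro f hf
  rw [I_eq] at hf
  induction hf using Submodule.span_induction with
  | mem x hx =>
    obtain ⟨d, hd, rfl⟩ := hx
    rcases gen_classify (k := k) q m hs1 d hd with hK | ⟨r, hr, rfl⟩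
    · exact Submodule.mem_sup_right hK
    · exact Submodule.mem_sup_left (Submodule.subset_span ⟨⟨r, by omega⟩, rfl⟩)
  | zero => exact zero_mem _
  | add x y _ _ hx hy => exact add_mem hx hy
  | smul p x hxspan hxW =>
    have hxI : x ∈ Iideal k q m N := by rw [I_eq]; exact hxspan
    have hdecomp : p • x = constantCoeff p • x + (p - C (constantCoeff p)) * x := by
      rw [smul_eq_mul, MvPolynomial.smul_eq_C_mul]; ring
    rw [hdecomp]
    refine add_mem (Submodule.smul_mem _ _ hxW) (Submodule.mem_sup_right ?_)
    exact XY_mul_mem q m (sub_C_mem_span_X p) hxI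

end St6
-- CHUNK 5 : krullDim of vector space lattice (general), outside St6

lemma krullDim_submodule (k V : Type*) [Field k] [AddCommGroup V] [Module k V]
    [FiniteDimensional k V] :
    Order.krullDim (Submodule k V) = (Module.finrank k V : WithBot ℕ∞) := by
  set n := Module.finrank k V with hn
  apply le_antisymm
  · rw [Order.krullDim]
    apply iSup_le
    intro p
    have key : ∀ i : Fin (p.length + 1), (i : ℕ) ≤ Module.finrank k (p.toFun i) := by
      intro i
      induction i using Fin.induction with
      | zero => simp
      | succ j ih =>
        have hlt : p.toFun j.castSucc < p.toFun j.succ := p.strictMono (by simp [Fin.lt_def])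
        have := Submodule.finrank_lt_finrank_of_lt hlt
        have := ih
        simp only [Fin.coe_castSucc] at this
        simp only [Fin.val_succ]
        omega
    have h1 := key (Fin.last _)
    have h2 : Module.finrank k (p.toFun (Fin.last _)) ≤ n := Submodule.finrank_le _
    simp only [Fin.val_last] at h1
    exact_mod_cast Nat.cast_le.mpr (le_trans h1 h2)
  · obtain b := Module.finBasis k V
    let W : Fin (n + 1) → Submodule k V := fun i => Submodule.span k (b '' {j | (j : ℕ) < i})
    have hW : StrictMono W := by
      intro i i' h
      constructor
      · apply Submodule.span_mono
        apply Set.image_mono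
        intro j hj
        simp only [Set.mem_setOf_eq] at hj ⊢
        exact lt_of_lt_of_le hj (Fin.le_iff_val_le_val.mp h.le)
      · intro hle
        have hi : (i : ℕ) < n := lt_of_lt_of_le h (by omega)
        have hmem : b ⟨i, hi⟩ ∈ W i' := Submodule.subset_span ⟨⟨i, hi⟩, by simpa using h, rfl⟩
        have hnot : b ⟨i, hi⟩ ∉ W i :=
          b.linearIndependent.notMem_span_image (by simp)
        exact hnot (hle hmem)
    have := Order.LTSeries.length_le_krullDim (LTSeries.mk n W hW)
    simpa using this


set_option maxHeartbeats 2000000 in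
set_option synthInstance.maxHeartbeats 1000000 in
/-- For all `n ≥ 1`, `ℓ_T( I_{n-1} / (Iₙ : x₃^{q+m}) ) = n`. -/
theorem statement6 (k : Type*) [Field k] (q m : ℕ) (hq : 1 ≤ q) (hm : 1 ≤ m) :
    ∀ n : ℕ, 1 ≤ n →
      moduleLength (MvPolynomial (Fin 2) k)
          ((Iideal k q m (n-1)) ⧸
            (Submodule.comap (Iideal k q m (n-1)).subtype
              (Submodule.colon (Iideal k q m n)
                (Ideal.span {(X 1 : MvPolynomial (Fin 2) k) ^ (q+m)}))))
        = (n : WithBot ℕ∞) := by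
  intro n hn
  obtain ⟨N, rfl⟩ : ∃ N, n = N + 1 := ⟨n - 1, by omega⟩
  have hs2 : 2 ≤ q + m := by omega
  have hs1 : 1 ≤ q + m := by omega
  set T := MvPolynomial (Fin 2) k with hT
  set I : Ideal T := Iideal k q m N with hI
  set Kc : Ideal T := St6.KK (k := k) q m (N+1) with hKc
  -- the colon in the statement is definitionally `Kc`
  show moduleLength T (↥I ⧸ Submodule.comap I.subtype Kc) = _
  let ψ : ↥I →ₗ[T] T ⧸ Kc := Kc.mkQ.comp I.subtype
  have hker : LinearMap.ker ψ = Submodule.comap I.subtype Kc := by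
    rw [LinearMap.ker_comp, Submodule.ker_mkQ]
  let e1 : (↥I ⧸ Submodule.comap I.subtype Kc) ≃ₗ[T] ↥(LinearMap.range ψ) :=
    (Submodule.quotEquivOfEq _ _ hker.symm).trans ψ.quotKerEquivRange
  set Q : Submodule T (T ⧸ Kc) := LinearMap.range ψ with hQ
  rw [moduleLength, Order.krullDim_eq_of_orderIso (Submodule.orderIsoMapComap e1)]
  -- the action of T on ↥Q factors through constant coefficients
  have hsubC : ∀ (p : T) (f : T), f ∈ I → (p - C (constantCoeff p)) * f ∈ Kc :=
    fun p f hf => St6.XY_mul_mem q m (St6.sub_C_mem_span_X p) hf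
  have key : ∀ (p : T) (x : ↥Q), p • x = (constantCoeff p) • x := by
    rintro p ⟨x, hx⟩
    obtain ⟨⟨f, hf⟩, rfl⟩ := hx
    apply Subtype.ext
    show p • (ψ ⟨f, hf⟩) = constantCoeff p • (ψ ⟨f, hf⟩)
    have hψ : ψ ⟨f, hf⟩ = Submodule.Quotient.mk f := rfl
    rw [hψ, ← Submodule.Quotient.mk_smul, ← Submodule.Quotient.mk_smul]
    rw [Submodule.Quotient.eq]
    have : p • f - constantCoeff p • f = (p - C (constantCoeff p)) * f := by
      rw [smul_eq_mul, MvPolynomial.smul_eq_C_mul]; ring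
    rw [this]
    exact hsubC p f hf
  -- submodule lattices over T and k coincide
  let oi : Submodule T ↥Q ≃o Submodule k ↥Q :=
    { toFun := Submodule.restrictScalars k
      invFun := fun W =>
        { carrier := W
          add_mem' := fun h1 h2 => W.add_mem h1 h2
          zero_mem' := W.zero_mem
          smul_mem' := fun p x hx => by
            show p • x ∈ W
            rw [key p x]
            exact W.smul_mem _ hx }
      left_inv := fun P => by ext x; rfl
      right_inv := fun W => by ext x; rfl
      map_rel_iff' := Iff.rfl }
  rw [Order.krullDim_eq_of_orderIso oi]
  -- the basis of Q
  let v : Fin (N+1) → ↥Q := fun r =>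
    ⟨ψ ⟨monomial (St6.bex (q+m) N r) 1, St6.bex_mem_I q m (by omega)⟩,
      LinearMap.mem_range_self ψ _⟩
  have hvval : ∀ r, (v r : T ⧸ Kc) =
      Submodule.Quotient.mk (monomial (St6.bex (q+m) N r) (1:k)) := fun r => rfl
  have hsum : ∀ c : Fin (N+1) → k, ((∑ r, c r • v r : ↥Q) : T ⧸ Kc)
      = Submodule.Quotient.mk (∑ r, c r • monomial (St6.bex (q+m) N r) (1:k)) := by
    intro c
    rw [AddSubmonoidClass.coe_finset_sum]
    have hterm : ∀ r : Fin (N+1), ((c r • v r : ↥Q) : T ⧸ Kc)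
        = Kc.mkQ (c r • monomial (St6.bex (q+m) N r) (1:k)) := by
      intro r
      rw [SetLike.val_smul_of_tower, hvval r, Submodule.mkQ_apply,
        Submodule.Quotient.mk_smul]
    rw [Finset.sum_congr rfl (fun r _ => hterm r), ← map_sum, Submodule.mkQ_apply]
  have hv : LinearIndependent k v := by
    rw [Fintype.linearIndependent_iff]
    intro c hc
    apply St6.indep_core q m hs2 c
    have h0 := hsum c
    rw [hc] at h0
    have := (Submodule.Quotient.mk_eq_zero Kc).mp h0.symm
    exact this
  have hsp : ⊤ ≤ Submodule.span k (Set.range v) := by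
    rintro ⟨x, hx⟩ -
    obtain ⟨⟨f, hf⟩, rfl⟩ := hx
    have hfW := St6.span_core q m hs1 f hf
    rw [Submodule.mem_sup] at hfW
    obtain ⟨g, hg, h, hh, hgh⟩ := hfW
    rw [Submodule.mem_span_range_iff_exists_fun] at hg
    obtain ⟨c, hc⟩ := hg
    have heq : (⟨ψ ⟨f, hf⟩, LinearMap.mem_range_self ψ _⟩ : ↥Q) = ∑ r, c r • v r := by
      apply Subtype.ext
      rw [hsum c, hc]
      show (Submodule.Quotient.mk f : T ⧸ Kc) = _
      rw [← hgh]
      rw [eq_comm, Submodule.Quotient.eq]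
      simpa using hh
    rw [heq]
    exact Submodule.sum_mem _ fun r _ =>
      Submodule.smul_mem _ _ (Submodule.subset_span ⟨r, rfl⟩)
  let B : Module.Basis (Fin (N+1)) k ↥Q := Module.Basis.mk hv hsp
  haveI : FiniteDimensional k ↥Q := Module.Finite.of_basis B
  rw [krullDim_submodule k ↥Q]
  rw [Module.finrank_eq_card_basis B, Fintype.card_fin]
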